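/- Assume f : ℝ → ℝ is continuously differentiable and there is β > 0 with f(β) ≤ 0 ≤ f(−β); let κ ≥ max_{|x|≤β}|f′(x)|; assume 0 ≤ V(z) ≤ 1 for all z ∈ ℝ. Suppose the step ratios satisfy 0 < r_k < 1 + √2 for 2 ≤ k ≤ N, that the real parameter η satisfies r_k²/(1+2r_k) < η < 1 for all 2 ≤ k ≤ N, and that the step sizes satisfy τ_n ≤ ((1+2r_n)η − r_n²)/(η²(1+r_n)) · (1−η)/(κ + 4ε²h⁻²) for all 1 ≤ n ≤ N (with r_1 = 0). If ‖φ^0‖_∞ ≤ β, then the solution of the BDF2-sESAV-I scheme satisfies ‖φ^n‖_∞ ≤ β for all 1 ≤ n ≤ N. -/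

import Mathlib

/-- Discrete Laplace operator on periodic grid functions. -/
noncomputable def lapH (M : ℕ) (h : ℝ) (v : ZMod M × ZMod M → ℝ) :
    ZMod M × ZMod M → ℝ :=
  fun p => (v (p.1 + 1, p.2) + v (p.1 - 1, p.2) + v (p.1, p.2 + 1) + v (p.1, p.2 - 1)
    - 4 * v p) / h ^ 2

/-- Discrete inner product on periodic grid functions. -/
noncomputable def ipH (M : ℕ) [NeZero M] (h : ℝ)
    (v w : ZMod M × ZMod M → ℝ) : ℝ :=
  h ^ 2 * ∑ p : ZMod M × ZMod M, v p * w p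

/-- Discrete maximum norm of a periodic grid function. -/
noncomputable def maxNorm (M : ℕ) [NeZero M] (v : ZMod M × ZMod M → ℝ) : ℝ :=
  Finset.univ.sup' ⟨(0, 0), Finset.mem_univ _⟩ fun p => |v p|

/-- E_{1h}[v] = h² Σ F(v(i,j)). -/
noncomputable def E1h (M : ℕ) [NeZero M] (h : ℝ) (F : ℝ → ℝ)
    (v : ZMod M × ZMod M → ℝ) : ℝ :=
  h ^ 2 * ∑ p : ZMod M × ZMod M, F (v p)

/-- g_h(v, w) = exp(w)/exp(E_{1h}[v]). -/
noncomputable def gh (M : ℕ) [NeZero M] (h : ℝ) (F : ℝ → ℝ)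
    (v : ZMod M × ZMod M → ℝ) (w : ℝ) : ℝ :=
  Real.exp w / Real.exp (E1h M h F v)

/-- Adjacent step ratio: r_k = τ_k/τ_{k−1} for k ≥ 2, and r_1 = 0. -/
noncomputable def ratio (τ : ℕ → ℝ) (k : ℕ) : ℝ :=
  if 2 ≤ k then τ k / τ (k - 1) else 0

/-- Variable-step BDF2 convolution kernels b_j^{(n)}. -/
noncomputable def bker (τ : ℕ → ℝ) (n j : ℕ) : ℝ :=
  if n = 1 then (if j = 0 then 1 / τ 1 else 0)
  else if j = 0 then (1 + 2 * ratio τ n) / (τ n * (1 + ratio τ n))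
  else if j = 1 then -(ratio τ n) ^ 2 / (τ n * (1 + ratio τ n))
  else 0

/-- Variable-step BDF2 operator D₂w^n = Σ_{k=1}^n b_{n−k}^{(n)}(w^k − w^{k−1}). -/
noncomputable def D2 (τ : ℕ → ℝ) (w : ℕ → ℝ) (n : ℕ) : ℝ :=
  ∑ k ∈ Finset.Icc 1 n, bker τ n (n - k) * (w k - w (k - 1))

/-- Recombined kernels d_k^{(n)}: d_0^{(n)} = b_0^{(n)},
d_k^{(n)} = η^{k−1}(b_0^{(n)}η + b_1^{(n)}) for k ≥ 1 (so d_1^{(1)} = η b_0^{(1)}). -/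
noncomputable def dker (τ : ℕ → ℝ) (η : ℝ) (n k : ℕ) : ℝ :=
  if k = 0 then bker τ n 0
  else η ^ (k - 1) * (bker τ n 0 * η + bker τ n 1)

/-- The BDF2-sESAV-I scheme: predictor equation (i), BDF2 equation (ii) and
auxiliary-variable equation (iii), for 1 ≤ n ≤ N, with R^0 = E_{1h}[φ^0]. -/
structure BDF2sESAVI (M : ℕ) [NeZero M] (h ε κ : ℝ) (f F V : ℝ → ℝ)
    (N : ℕ) (τ : ℕ → ℝ) (φ φhat : ℕ → ZMod M × ZMod M → ℝ) (R : ℕ → ℝ) : Prop where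
  init : R 0 = E1h M h F (φ 0)
  pred : ∀ n, 1 ≤ n → n ≤ N → ∀ p,
    (φhat n p - φ (n - 1) p) / τ n =
      ε ^ 2 * lapH M h (φhat n) p + f (φ (n - 1) p)
        - κ * (φhat n p - φ (n - 1) p)
  step : ∀ n, 1 ≤ n → n ≤ N → ∀ p,
    D2 τ (fun k => φ k p) n =
      ε ^ 2 * lapH M h (φ n) p
        + V (gh M h F (φhat n) (R (n - 1))) * f (φhat n p)
        - κ * (φ n p - V (gh M h F (φhat n) (R (n - 1))) * φhat n p)
  aux : ∀ n, 1 ≤ n → n ≤ N →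
    (R n - R (n - 1)) / τ n =
      - ipH M h
          (fun p => V (gh M h F (φhat n) (R (n - 1))) * f (φhat n p)
            - κ * (φ n p - V (gh M h F (φhat n) (R (n - 1))) * φhat n p))
          (fun p => (φ n p - φ (n - 1) p) / τ n)

lemma lapH_neg (M : ℕ) (h : ℝ) (v : ZMod M × ZMod M → ℝ) (p : ZMod M × ZMod M) :
    lapH M h (fun q => -v q) p = -lapH M h v p := by
  simp only [lapH]; ring

lemma lap_bound (M : ℕ) (h : ℝ) (hh : 0 < h) (φ ψ : ZMod M × ZMod M → ℝ)
    (η β : ℝ) (hη : 0 ≤ η) (p : ZMod M × ZMod M)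
    (hmax : ∀ q, φ q - η * ψ q ≤ φ p - η * ψ p)
    (hψ : ∀ q, ψ q ≤ β) :
    lapH M h φ p ≤ 4 * (η * (β - ψ p)) / h ^ 2 := by
  have h2 : (0:ℝ) < h ^ 2 := by positivity
  have key : φ (p.1 + 1, p.2) + φ (p.1 - 1, p.2) + φ (p.1, p.2 + 1) + φ (p.1, p.2 - 1)
      - 4 * φ p ≤ 4 * (η * (β - ψ p)) := by
    have m1 := hmax (p.1 + 1, p.2)
    have m2 := hmax (p.1 - 1, p.2)
    have m3 := hmax (p.1, p.2 + 1)
    have m4 := hmax (p.1, p.2 - 1)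
    have b1 := mul_le_mul_of_nonneg_left (hψ (p.1 + 1, p.2)) hη
    have b2 := mul_le_mul_of_nonneg_left (hψ (p.1 - 1, p.2)) hη
    have b3 := mul_le_mul_of_nonneg_left (hψ (p.1, p.2 + 1)) hη
    have b4 := mul_le_mul_of_nonneg_left (hψ (p.1, p.2 - 1)) hη
    linarith
  unfold lapH
  exact div_le_div_of_nonneg_right key h2.le

lemma predkey (t κ β x y E fx : ℝ) (ht : 0 < t) (hκ : 0 ≤ κ) (hxβ : x ≤ β)
    (hE : E ≤ 0) (hfx : fx ≤ κ * (β - x))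
    (heq : (y - x) / t = E + fx - κ * (y - x)) : y ≤ β := by
  by_contra hy
  push_neg at hy
  have h1 : κ * (β - x) ≤ κ * (y - x) := by nlinarith
  have h2 : E + fx - κ * (y - x) ≤ 0 := by linarith
  have h3 : y - x = (E + fx - κ * (y - x)) * t := by
    field_simp at heq; linarith
  have h4 : y - x ≤ 0 := by nlinarith
  linarith

lemma keylemma (b0 B κ K η β a c X L2 W : ℝ)
    (hb0κ : 0 < b0 + κ) (hB : 0 ≤ B) (hη : 0 < η) (hη2 : η < 1)
    (hcond : η ^ 2 * K ≤ (1 - η) * (b0 * η - B))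
    (heq : (b0 + κ) * (X - η * a) = (b0 * (1 - η) - κ * η) * a + B * (a - c) + L2 + W)
    (hL : L2 ≤ η * (K - κ) * (β - a))
    (hW : W ≤ κ * β)
    (ha : a ≤ η * c + (1 - η) * β)
    (hc : c ≤ β) :
    X - η * a ≤ (1 - η) * β := by
  set c2 : ℝ := b0 * (1 - η) - η * K + B with hc2def
  have hc2B : 0 ≤ c2 * η - B := by nlinarith
  have hc2 : 0 ≤ c2 := by nlinarith
  have h1 : c2 * a ≤ c2 * (η * c + (1 - η) * β) := mul_le_mul_of_nonneg_left ha hc2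
  have h2 : (c2 * η - B) * c ≤ (c2 * η - B) * β := mul_le_mul_of_nonneg_left hc hc2B
  have h3 : (b0 + κ) * (X - η * a) ≤ (b0 + κ) * ((1 - η) * β) := by nlinarith
  exact le_of_mul_le_mul_left h3 hb0κ

lemma D2_eq (τ : ℕ → ℝ) (w : ℕ → ℝ) (m : ℕ) (hm : 1 ≤ m) :
    D2 τ w m = bker τ m 0 * (w m - w (m - 1)) + bker τ m 1 * (w (m - 1) - w (m - 2)) := by
  match m, hm with
  | 1, _ => simp [D2, bker]
  | (k+2), _ =>
    unfold D2
    rw [← Finset.sum_subset (Finset.Icc_subset_Icc (by omega) le_rfl :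
        Finset.Icc (k+1) (k+2) ⊆ Finset.Icc 1 (k+2))]
    · rw [show Finset.Icc (k+1) (k+2) = {k+1, k+2} by
        ext x
        simp only [Finset.mem_Icc, Finset.mem_insert, Finset.mem_singleton]
        omega]
      rw [Finset.sum_insert (by simp), Finset.sum_singleton]
      have e1 : k + 2 - (k+1) = 1 := by omega
      have e2 : k + 2 - (k+2) = 0 := by omega
      rw [e1, e2]
      have e3 : k + 1 - 1 = k := by omega
      have e4 : k + 2 - 1 = k + 1 := by omega
      have e5 : k + 2 - 2 = k := by omega
      rw [e3, e4, e5]; ring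
    · intro x hx hxn
      simp only [Finset.mem_Icc] at hx hxn
      have : bker τ (k+2) (k+2-x) = 0 := by
        unfold bker
        rw [if_neg (by omega), if_neg (by omega), if_neg (by omega)]
      rw [this, zero_mul]

set_option maxHeartbeats 1000000 in
/-- Theorem 3.1 (discrete MBP of the BDF2-sESAV-I scheme): under the stated
conditions on f, κ, V, the step ratios, η and the step sizes, if ‖φ^0‖_∞ ≤ β
then ‖φ^n‖_∞ ≤ β for all 1 ≤ n ≤ N. -/
theorem stmt0 (M : ℕ) [NeZero M] (hM : 1 ≤ M) (h ε κ β : ℝ)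
    (hh : 0 < h) (hε : 0 < ε)
    (f F V : ℝ → ℝ) (hf : ContDiff ℝ 1 f) (hβ : 0 < β)
    (hfβ : f β ≤ 0) (hfβ' : 0 ≤ f (-β))
    (hκ : ∀ x : ℝ, |x| ≤ β → |deriv f x| ≤ κ)
    (hV : ∀ z : ℝ, 0 ≤ V z ∧ V z ≤ 1)
    (N : ℕ) (τ : ℕ → ℝ) (hτ : ∀ k, 1 ≤ k → k ≤ N → 0 < τ k)
    (hr : ∀ k, 2 ≤ k → k ≤ N → 0 < ratio τ k ∧ ratio τ k < 1 + Real.sqrt 2)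
    (η : ℝ) (hη1 : ∀ k, 2 ≤ k → k ≤ N → (ratio τ k) ^ 2 / (1 + 2 * ratio τ k) < η)
    (hη2 : η < 1)
    (hstep : ∀ n, 1 ≤ n → n ≤ N →
      τ n ≤ ((1 + 2 * ratio τ n) * η - (ratio τ n) ^ 2) / (η ^ 2 * (1 + ratio τ n))
        * (1 - η) / (κ + 4 * ε ^ 2 / h ^ 2))
    (φ φhat : ℕ → ZMod M × ZMod M → ℝ) (R : ℕ → ℝ)
    (hsch : BDF2sESAVI M h ε κ f F V N τ φ φhat R)
    (hφ0 : maxNorm M (φ 0) ≤ β) :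
    ∀ n, 1 ≤ n → n ≤ N → maxNorm M (φ n) ≤ β := by
  have hκ0 : 0 ≤ κ := le_trans (abs_nonneg _) (hκ 0 (by simpa using hβ.le))
  -- Lipschitz bound on [-β, β]
  have hlip : ∀ x y : ℝ, |x| ≤ β → |y| ≤ β → |f x - f y| ≤ κ * |x - y| := by
    intro x y hx hy
    have hdiff : ∀ z ∈ Set.Icc (-β) β, DifferentiableAt ℝ f z :=
      fun z _ => (hf.differentiable one_ne_zero).differentiableAt
    have hbd : ∀ z ∈ Set.Icc (-β) β, ‖deriv f z‖ ≤ κ := by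
      intro z hz
      exact hκ z (abs_le.mpr ⟨hz.1, hz.2⟩)
    have := Convex.norm_image_sub_le_of_norm_deriv_le hdiff hbd (convex_Icc _ _)
      (Set.mem_Icc.mpr ⟨(abs_le.mp hy).1, (abs_le.mp hy).2⟩)
      (Set.mem_Icc.mpr ⟨(abs_le.mp hx).1, (abs_le.mp hx).2⟩)
    simpa [Real.norm_eq_abs] using this
  have hfup : ∀ x : ℝ, |x| ≤ β → f x ≤ κ * (β - x) := by
    intro x hx
    have h1 := hlip x β hx (by rw [abs_of_nonneg hβ.le])
    have hxb : x ≤ β := (abs_le.mp hx).2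
    rw [abs_of_nonpos (by linarith : x - β ≤ 0)] at h1
    have h2 := (abs_le.mp h1).2
    nlinarith
  have hflow : ∀ x : ℝ, |x| ≤ β → -f x ≤ κ * (β - -x) := by
    intro x hx
    have h1 := hlip x (-β) hx (by rw [abs_neg, abs_of_nonneg hβ.le])
    have hxb : -β ≤ x := (abs_le.mp hx).1
    rw [abs_of_nonneg (by linarith : (0:ℝ) ≤ x - -β)] at h1
    have h2 := (abs_le.mp h1).1
    nlinarith
  have hW1 : ∀ x : ℝ, |x| ≤ β → |f x + κ * x| ≤ κ * β := by
    intro x hx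
    rw [abs_le]
    constructor
    · have := hflow x hx; nlinarith
    · have := hfup x hx; nlinarith
  intro n0 hn01 hn0N
  have hN1 : 1 ≤ N := le_trans hn01 hn0N
  have hK : (0:ℝ) < κ + 4 * ε ^ 2 / h ^ 2 := by positivity
  have hκK : κ ≤ κ + 4 * ε ^ 2 / h ^ 2 := by
    have : (0:ℝ) ≤ 4 * ε ^ 2 / h ^ 2 := by positivity
    linarith
  have ht1 : 0 < τ 1 := hτ 1 le_rfl hN1
  have hr1 : ratio τ 1 = 0 := by simp [ratio]
  have hη0 : 0 < η := by
    by_contra hcontra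
    push_neg at hcontra
    have e1 := hstep 1 le_rfl hN1
    rw [hr1] at e1
    rcases eq_or_lt_of_le hcontra with he | he
    · rw [he] at e1
      norm_num at e1
      linarith
    · have hη2pos : (0:ℝ) < η ^ 2 * (1 + 0) := by nlinarith
      have hnum : ((1 + 2 * 0) * η - 0 ^ 2) / (η ^ 2 * (1 + 0)) < 0 := by
        apply div_neg_of_neg_of_pos _ hη2pos
        nlinarith
      have : ((1 + 2 * 0) * η - (0:ℝ) ^ 2) / (η ^ 2 * (1 + 0)) * (1 - η) / (κ + 4 * ε ^ 2 / h ^ 2) < 0 := by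
        apply div_neg_of_neg_of_pos _ hK
        exact mul_neg_of_neg_of_pos hnum (by linarith)
      linarith
  -- main induction
  have main : ∀ m, m ≤ N →
      (∀ p, |φ m p| ≤ β) ∧ (∀ p, |φ m p - η * φ (m - 1) p| ≤ (1 - η) * β)
        ∧ (∀ p, |φ (m - 1) p| ≤ β) := by
    intro m
    induction m with
    | zero =>
      intro _
      have h0 : ∀ p, |φ 0 p| ≤ β := by
        intro p
        exact le_trans (Finset.le_sup' (fun q => |φ 0 q|) (Finset.mem_univ p)) hφ0
      refine ⟨h0, ?_, by simpa using h0⟩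
      intro p
      have he : φ 0 p - η * φ (0 - 1) p = (1 - η) * φ 0 p := by
        norm_num; ring
      rw [he, abs_mul, abs_of_nonneg (by linarith : (0:ℝ) ≤ 1 - η)]
      exact mul_le_mul_of_nonneg_left (h0 p) (by linarith)
    | succ n ih =>
      intro hmN
      obtain ⟨IH1, IH2, IH3⟩ := ih (by omega)
      have hm1 : 1 ≤ n + 1 := by omega
      have htm : 0 < τ (n + 1) := hτ _ hm1 hmN
      have hr0 : 0 ≤ ratio τ (n + 1) := by
        rcases Nat.lt_or_ge (n + 1) 2 with h2 | h2
        · have h1 : n + 1 = 1 := by omega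
          rw [h1, hr1]
        · exact (hr _ h2 hmN).1.le
      have hb0v : bker τ (n+1) 0 = (1 + 2 * ratio τ (n+1)) / (τ (n+1) * (1 + ratio τ (n+1))) := by
        rcases eq_or_ne (n+1) 1 with h1 | h1
        · rw [h1, hr1]; simp [bker]
        · simp [bker, h1]; exact fun h0 => absurd h0 (by omega)
      have hb1v : bker τ (n+1) 1 = -(ratio τ (n+1)) ^ 2 / (τ (n+1) * (1 + ratio τ (n+1))) := by
        rcases eq_or_ne (n+1) 1 with h1 | h1
        · rw [h1, hr1]; simp [bker]
        · simp [bker, h1]; exact fun h0 => absurd h0 (by omega)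
      set r := ratio τ (n+1) with hrd
      set t := τ (n+1) with htd
      have htr : (0:ℝ) < t * (1 + r) := by
        apply mul_pos htm; linarith
      set b0 := (1 + 2*r)/(t*(1+r)) with hb0d
      set B := r^2/(t*(1+r)) with hBd
      have hb0pos : 0 < b0 := div_pos (by linarith) htr
      have hBnn : 0 ≤ B := div_nonneg (by positivity) htr.le
      have hb0κ : 0 < b0 + κ := by linarith
      -- step-size condition
      have hcond : η ^ 2 * (κ + 4 * ε ^ 2 / h ^ 2) ≤ (1 - η) * (b0 * η - B) := by
        have hs := hstep (n+1) hm1 hmN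
        rw [← hrd, ← htd] at hs
        have hd : (0:ℝ) < η ^ 2 * (1 + r) := mul_pos (pow_pos hη0 2) (by linarith)
        have hs1 : t * (κ + 4 * ε ^ 2 / h ^ 2)
            ≤ ((1 + 2*r)*η - r^2) / (η^2*(1+r)) * (1-η) := (le_div_iff₀ hK).mp hs
        have hs2 : ((1 + 2*r)*η - r^2) / (η^2*(1+r)) * (1-η)
            = ((1 + 2*r)*η - r^2) * (1-η) / (η^2*(1+r)) := by ring
        rw [hs2, le_div_iff₀ hd] at hs1
        have hbB : b0 * η - B = ((1 + 2*r)*η - r^2) / (t*(1+r)) := by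
          rw [hb0d, hBd]; ring
        rw [hbB, ← mul_div_assoc, le_div_iff₀ htr]
        linarith [hs1]
      -- predictor bounds
      have hpred := hsch.pred (n+1) hm1 hmN
      simp only [Nat.add_sub_cancel] at hpred
      rw [← htd] at hpred
      have hhat_up : ∀ p, φhat (n+1) p ≤ β := by
        obtain ⟨p0, _, hp0⟩ := Finset.exists_max_image Finset.univ (φhat (n+1))
          ⟨(0,0), Finset.mem_univ _⟩
        have hlap0 : lapH M h (φhat (n+1)) p0 ≤ 4 * ((0:ℝ) * (β - φ n p0)) / h ^ 2 := by
          apply lap_bound M h hh _ (φ n) 0 β le_rfl p0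
          · intro q; simpa using hp0 q (Finset.mem_univ q)
          · intro q; exact (abs_le.mp (IH1 q)).2
        have hlap0' : ε ^ 2 * lapH M h (φhat (n+1)) p0 ≤ 0 := by
          apply mul_nonpos_of_nonneg_of_nonpos (by positivity)
          simpa using hlap0
        intro p
        refine le_trans (hp0 p (Finset.mem_univ p)) ?_
        exact predkey t κ β (φ n p0) (φhat (n+1) p0) (ε ^ 2 * lapH M h (φhat (n+1)) p0)
          (f (φ n p0)) htm hκ0 (abs_le.mp (IH1 p0)).2 hlap0' (hfup _ (IH1 p0)) (hpred p0)
      have hhat_lo : ∀ p, -β ≤ φhat (n+1) p := by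
        obtain ⟨p1, _, hp1⟩ := Finset.exists_min_image Finset.univ (φhat (n+1))
          ⟨(0,0), Finset.mem_univ _⟩
        have hlap1 : lapH M h (fun q => -φhat (n+1) q) p1 ≤ 4 * ((0:ℝ) * (β - -φ n p1)) / h ^ 2 := by
          apply lap_bound M h hh _ (fun q => -φ n q) 0 β le_rfl p1
          · intro q; simpa using hp1 q (Finset.mem_univ q)
          · intro q; exact neg_le.mp (abs_le.mp (IH1 q)).1
        rw [lapH_neg] at hlap1
        have hlap1' : -(ε ^ 2 * lapH M h (φhat (n+1)) p1) ≤ 0 := by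
          have : -lapH M h (φhat (n+1)) p1 ≤ 0 := by simpa using hlap1
          nlinarith [sq_nonneg ε]
        intro p
        have key : -φhat (n+1) p1 ≤ β := by
          apply predkey t κ β (-φ n p1) (-φhat (n+1) p1) (-(ε ^ 2 * lapH M h (φhat (n+1)) p1))
            (-f (φ n p1)) htm hκ0 (neg_le.mp (abs_le.mp (IH1 p1)).1) hlap1'
            (hflow _ (IH1 p1))
          have hpp := hpred p1
          linear_combination (-1 : ℝ) * hpp
        have := hp1 p (Finset.mem_univ p)
        linarith
      have hhat : ∀ p, |φhat (n+1) p| ≤ β :=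
        fun p => abs_le.mpr ⟨hhat_lo p, hhat_up p⟩
      -- nonlinear term bound
      have hstepsch := hsch.step (n+1) hm1 hmN
      simp only [Nat.add_sub_cancel] at hstepsch
      set VV := V (gh M h F (φhat (n+1)) (R n)) with hVVd
      have hVV0 : 0 ≤ VV := (hV _).1
      have hVV1 : VV ≤ 1 := (hV _).2
      have hWb : ∀ p, |VV * f (φhat (n+1) p) + κ * (VV * φhat (n+1) p)| ≤ κ * β := by
        intro p
        have he : VV * f (φhat (n+1) p) + κ * (VV * φhat (n+1) p)
            = VV * (f (φhat (n+1) p) + κ * φhat (n+1) p) := by ring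
        rw [he, abs_mul, abs_of_nonneg hVV0]
        calc VV * |f (φhat (n+1) p) + κ * φhat (n+1) p| ≤ 1 * (κ * β) :=
              mul_le_mul hVV1 (hW1 _ (hhat p)) (abs_nonneg _) zero_le_one
          _ = κ * β := one_mul _
      -- the rearranged scheme equation
      have hsteq : ∀ p, b0 * (φ (n+1) p - φ n p) + (-B) * (φ n p - φ (n-1) p)
          = ε ^ 2 * lapH M h (φ (n+1)) p + VV * f (φhat (n+1) p)
            - κ * (φ (n+1) p - VV * φhat (n+1) p) := by
        intro p
        have hs := hstepsch p
        rw [D2_eq τ _ (n+1) hm1] at hs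
        simp only [Nat.add_sub_cancel, Nat.succ_sub_succ, Nat.sub_zero] at hs
        rw [hb0v, hb1v] at hs
        rw [hBd]
        linear_combination hs
      -- upper bound for z
      have hzu : ∀ p, φ (n+1) p - η * φ n p ≤ (1 - η) * β := by
        obtain ⟨p0, _, hp0⟩ := Finset.exists_max_image Finset.univ
          (fun q => φ (n+1) q - η * φ n q) ⟨(0,0), Finset.mem_univ _⟩
        have hlapb := lap_bound M h hh (φ (n+1)) (φ n) η β hη0.le p0
          (fun q => hp0 q (Finset.mem_univ q)) (fun q => (abs_le.mp (IH1 q)).2)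
        have hkey := keylemma b0 B κ (κ + 4 * ε ^ 2 / h ^ 2) η β (φ n p0) (φ (n-1) p0)
          (φ (n+1) p0) (ε ^ 2 * lapH M h (φ (n+1)) p0)
          (VV * f (φhat (n+1) p0) + κ * (VV * φhat (n+1) p0))
          hb0κ hBnn hη0 hη2 hcond
          (by linear_combination hsteq p0)
          (by
            have h5 := mul_le_mul_of_nonneg_left hlapb (sq_nonneg ε)
            calc ε ^ 2 * lapH M h (φ (n+1)) p0 ≤ ε ^ 2 * (4 * (η * (β - φ n p0)) / h ^ 2) := h5
              _ = η * ((κ + 4 * ε ^ 2 / h ^ 2) - κ) * (β - φ n p0) := by ring)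
          ((abs_le.mp (hWb p0)).2)
          (by linarith [(abs_le.mp (IH2 p0)).2])
          ((abs_le.mp (IH3 p0)).2)
        intro p
        exact le_trans (hp0 p (Finset.mem_univ p)) hkey
      -- lower bound for z
      have hzl : ∀ p, -((1 - η) * β) ≤ φ (n+1) p - η * φ n p := by
        obtain ⟨p1, _, hp1⟩ := Finset.exists_min_image Finset.univ
          (fun q => φ (n+1) q - η * φ n q) ⟨(0,0), Finset.mem_univ _⟩
        have hlapb := lap_bound M h hh (fun q => -φ (n+1) q) (fun q => -φ n q) η β hη0.le p1
          (fun q => by have := hp1 q (Finset.mem_univ q); linarith)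
          (fun q => neg_le.mp (abs_le.mp (IH1 q)).1)
        rw [lapH_neg] at hlapb
        have hkey := keylemma b0 B κ (κ + 4 * ε ^ 2 / h ^ 2) η β (-φ n p1) (-φ (n-1) p1)
          (-φ (n+1) p1) (-(ε ^ 2 * lapH M h (φ (n+1)) p1))
          (-(VV * f (φhat (n+1) p1) + κ * (VV * φhat (n+1) p1)))
          hb0κ hBnn hη0 hη2 hcond
          (by linear_combination (-1 : ℝ) * hsteq p1)
          (by
            have h5 := mul_le_mul_of_nonneg_left hlapb (sq_nonneg ε)
            calc -(ε ^ 2 * lapH M h (φ (n+1)) p1) = ε ^ 2 * (-lapH M h (φ (n+1)) p1) := by ring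
              _ ≤ ε ^ 2 * (4 * (η * (β - -φ n p1)) / h ^ 2) := h5
              _ = η * ((κ + 4 * ε ^ 2 / h ^ 2) - κ) * (β - -φ n p1) := by ring)
          (by linarith [(abs_le.mp (hWb p1)).1])
          (by linarith [(abs_le.mp (IH2 p1)).1])
          (by linarith [(abs_le.mp (IH3 p1)).1])
        intro p
        have := hp1 p (Finset.mem_univ p)
        linarith [hkey]
      have hz : ∀ p, |φ (n+1) p - η * φ n p| ≤ (1 - η) * β :=
        fun p => abs_le.mpr ⟨hzl p, hzu p⟩
      have h1 : ∀ p, |φ (n+1) p| ≤ β := by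
        intro p
        have hb := abs_le.mp (IH1 p)
        have hc1 := abs_le.mp (hz p)
        rw [abs_le]
        constructor
        · have := mul_le_mul_of_nonneg_left hb.1 hη0.le
          linarith [hc1.1]
        · have := mul_le_mul_of_nonneg_left hb.2 hη0.le
          linarith [hc1.2]
      refine ⟨h1, ?_, ?_⟩
      · simpa using hz
      · simpa using IH1
  have hfin := (main n0 hn0N).1
  unfold maxNorm
  exact Finset.sup'_le _ _ (fun p _ => hfin p)
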